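/- Let f : ℝ₊ → ℝ be twice continuously differentiable. Then for every s, κ > 0, f(s) = f(κ) + f'(κ)((s−κ)⁺ − (κ−s)⁺) + ∫₀^κ f''(K)(K−s)⁺ dK + ∫_κ^∞ f''(K)(s−K)⁺ dK. -/

import Mathlib

open MeasureTheory

lemma aux_cont_dd (f : ℝ → ℝ) (hf : ContDiff ℝ 2 f) :
    Differentiable ℝ f ∧ Differentiable ℝ (deriv f) ∧ Continuous (deriv (deriv f)) := by
  have h2 : ContDiff ℝ ((1 : ℕ∞) + 1) f := by exact_mod_cast hf
  rw [contDiff_succ_iff_deriv] at h2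
  obtain ⟨hdf, -, hcd⟩ := h2
  have h1 : ContDiff ℝ (1 : ℕ∞) (deriv f) := by exact_mod_cast hcd
  have h1' := contDiff_one_iff_deriv.mp h1
  exact ⟨hdf, h1'.1, h1'.2⟩

lemma aux_ftc (f : ℝ → ℝ) (hf : ContDiff ℝ 2 f) (a b : ℝ) :
    ∫ K in a..b, deriv (deriv f) K * (b - K) =
      f b - f a - deriv f a * (b - a) := by
  obtain ⟨hdf, hdf', hcdd⟩ := aux_cont_dd f hf
  have hderiv : ∀ K, HasDerivAt (fun K => f K + deriv f K * (b - K))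
      (deriv (deriv f) K * (b - K)) K := by
    intro K
    have h1' : HasDerivAt f (deriv f K) K := (hdf K).hasDerivAt
    have h2' : HasDerivAt (deriv f) (deriv (deriv f) K) K := (hdf' K).hasDerivAt
    have h3 : HasDerivAt (fun K : ℝ => b - K) (-1) K := by
      simpa using (hasDerivAt_id K).const_sub b
    have := h1'.add (h2'.mul h3)
    refine this.congr_deriv ?_
    ring
  have hcont : Continuous fun K => deriv (deriv f) K * (b - K) :=
    hcdd.mul (by continuity)
  rw [intervalIntegral.integral_eq_sub_of_hasDerivAt (fun K _ => hderiv K)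
    (hcont.intervalIntegrable a b)]
  ring

/-- Carr–Madan spanning identity: a twice continuously differentiable payoff `f` on `ℝ₊`
is spanned by a bond, a forward and a continuum of calls and puts. -/
theorem stmt_3 (f : ℝ → ℝ) (hf : ContDiff ℝ 2 f) (s κ : ℝ) (hs : 0 < s) (hκ : 0 < κ) :
    f s = f κ + deriv f κ * (max (s - κ) 0 - max (κ - s) 0)
      + (∫ K in (0 : ℝ)..κ, deriv (deriv f) K * max (K - s) 0)
      + ∫ K in Set.Ioi κ, deriv (deriv f) K * max (s - K) 0 := by
  obtain ⟨hdf, hdf', hcdd⟩ := aux_cont_dd f hf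
  have hcont1 : Continuous fun K => deriv (deriv f) K * max (K - s) 0 :=
    hcdd.mul (by continuity)
  rcases le_or_gt s κ with h | h
  · -- s ≤ κ
    have hIoi : (∫ K in Set.Ioi κ, deriv (deriv f) K * max (s - K) 0) = 0 := by
      apply setIntegral_eq_zero_of_forall_eq_zero
      intro K hK
      rw [Set.mem_Ioi] at hK
      have : s - K ≤ 0 := by linarith
      simp [max_eq_right this]
    have hsplit : (∫ K in (0 : ℝ)..κ, deriv (deriv f) K * max (K - s) 0)
        = ∫ K in s..κ, deriv (deriv f) K * (K - s) := by
      rw [← intervalIntegral.integral_add_adjacent_intervals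
        (hcont1.intervalIntegrable 0 s) (hcont1.intervalIntegrable s κ)]
      have e1 : (∫ K in (0 : ℝ)..s, deriv (deriv f) K * max (K - s) 0) = 0 := by
        rw [intervalIntegral.integral_congr (g := fun _ => 0)]
        · simp
        · intro K hK
          rw [Set.uIcc_of_le hs.le] at hK
          have : K - s ≤ 0 := by have := hK.2; linarith
          simp [max_eq_right this]
      have e2 : (∫ K in s..κ, deriv (deriv f) K * max (K - s) 0)
          = ∫ K in s..κ, deriv (deriv f) K * (K - s) := by
        apply intervalIntegral.integral_congr
        intro K hK
        rw [Set.uIcc_of_le h] at hK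
        have : (0 : ℝ) ≤ K - s := by have := hK.1; linarith
        simp [max_eq_left this]
      rw [e1, e2, zero_add]
    have key : (∫ K in s..κ, deriv (deriv f) K * (K - s))
        = f s - f κ - deriv f κ * (s - κ) := by
      rw [intervalIntegral.integral_symm κ s, ← aux_ftc f hf κ s,
        ← intervalIntegral.integral_neg]
      apply intervalIntegral.integral_congr
      intro K _
      ring
    rw [hIoi, hsplit, key, max_eq_right (by linarith : s - κ ≤ 0),
      max_eq_left (by linarith : (0:ℝ) ≤ κ - s)]
    ring
  · -- κ < s
    have hIcc : (∫ K in (0 : ℝ)..κ, deriv (deriv f) K * max (K - s) 0) = 0 := by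
      rw [intervalIntegral.integral_congr (g := fun _ => 0)]
      · simp
      · intro K hK
        rw [Set.uIcc_of_le hκ.le] at hK
        have : K - s ≤ 0 := by have := hK.2; linarith
        simp [max_eq_right this]
    have hIoi : (∫ K in Set.Ioi κ, deriv (deriv f) K * max (s - K) 0)
        = ∫ K in κ..s, deriv (deriv f) K * (s - K) := by
      have hind : ∀ K ∈ Set.Ioi κ, deriv (deriv f) K * max (s - K) 0
          = (Set.Ioc κ s).indicator (fun K => deriv (deriv f) K * max (s - K) 0) K := by
        intro K hK
        rw [Set.mem_Ioi] at hK
        by_cases hKs : K ≤ s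
        · rw [Set.indicator_of_mem (Set.mem_Ioc.mpr ⟨hK, hKs⟩)]
        · rw [Set.indicator_of_notMem (fun hm => hKs (Set.mem_Ioc.mp hm).2)]
          have hle : s - K ≤ 0 := by linarith
          simp [max_eq_right hle]
      rw [setIntegral_congr_fun measurableSet_Ioi hind,
        setIntegral_indicator measurableSet_Ioc]
      have : Set.Ioi κ ∩ Set.Ioc κ s = Set.Ioc κ s := by
        ext x
        simp only [Set.mem_inter_iff, Set.mem_Ioi, Set.mem_Ioc, and_iff_right_iff_imp]
        exact fun h1 => h1.1
      rw [this, ← intervalIntegral.integral_of_le h.le]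
      apply intervalIntegral.integral_congr
      intro K hK
      rw [Set.uIcc_of_le h.le] at hK
      have : (0 : ℝ) ≤ s - K := by have := hK.2; linarith
      simp [max_eq_left this]
    rw [hIcc, hIoi, aux_ftc f hf κ s, max_eq_left (by linarith : (0:ℝ) ≤ s - κ),
      max_eq_right (by linarith : κ - s ≤ 0)]
    ring
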